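/- The type B alternating Eulerian polynomials satisfy the recurrence B̂_{n+1}(x) = (1 + n + x + n x²)·B̂_n(x) + (1−x)(1+x²)·B̂_n′(x) for all n ≥ 0, where B̂_n′ denotes the derivative, with initial conditions B̂_0(x) = 1 and B̂_1(x) = 1 + x. -/

import Mathlib

open Finset

/-- Signed permutations of order `n` (the hyperoctahedral group), modeled as a
permutation of `Fin n` together with a sign for each position. -/
abbrev BSigned (n : ℕ) := Equiv.Perm (Fin n) × (Fin n → Bool)

/-- The word of a signed permutation: `bword σ j = σ(j)` for `1 ≤ j ≤ n`,
with the convention `σ(0) = 0`. -/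
def bword {n : ℕ} (σ : BSigned n) (j : ℕ) : ℤ :=
  if h : 1 ≤ j ∧ j ≤ n then
    (if σ.2 ⟨j - 1, by omega⟩ then -1 else 1) * ((σ.1 ⟨j - 1, by omega⟩ : ℕ) + 1)
  else 0

/-- The number of alternating descents of a signed permutation: the number of
`0 ≤ j ≤ n-1` such that `j` is even and `σ(j) < σ(j+1)`, or `j` is odd and `σ(j) > σ(j+1)`. -/
def altdesB {n : ℕ} (σ : BSigned n) : ℕ :=
  ((Finset.range n).filter (fun j => (Even j ∧ bword σ j < bword σ (j + 1)) ∨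
      (Odd j ∧ bword σ (j + 1) < bword σ j))).card

/-- The type B alternating Eulerian number `B̂(n,k)`. -/
def Bhat (n k : ℕ) : ℕ :=
  (Finset.univ.filter (fun σ : BSigned n => altdesB σ = k)).card

/-- The type B alternating Eulerian polynomial `B̂_n(x)` as a real function. -/
noncomputable def Bpoly (n : ℕ) (x : ℝ) : ℝ :=
  ∑ σ : BSigned n, x ^ altdesB σ

/-- The word of a permutation of `{1,…,n}`: `aword π j = π(j)` for `1 ≤ j ≤ n`,
with the convention `π(0) = 0`. -/
def aword {n : ℕ} (π : Equiv.Perm (Fin n)) (j : ℕ) : ℕ :=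
  if h : 1 ≤ j ∧ j ≤ n then (π ⟨j - 1, by omega⟩ : ℕ) + 1 else 0

/-- The number of alternating descents of a permutation: the number of
`1 ≤ j ≤ n-1` such that `j` is odd and `π(j) > π(j+1)`, or `j` is even and `π(j) < π(j+1)`. -/
def altdesA {n : ℕ} (π : Equiv.Perm (Fin n)) : ℕ :=
  ((Finset.Icc 1 (n - 1)).filter (fun j => (Odd j ∧ aword π (j + 1) < aword π j) ∨
      (Even j ∧ aword π j < aword π (j + 1)))).card

/-- The type A alternating Eulerian number `Â(n,k)`. -/
def Ahat (n k : ℕ) : ℕ :=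
  (Finset.univ.filter (fun π : Equiv.Perm (Fin n) => altdesA π = k)).card

/-- The type A alternating Eulerian polynomial `Â_n(x)` as a real function. -/
noncomputable def Apoly (n : ℕ) (x : ℝ) : ℝ :=
  ∑ π : Equiv.Perm (Fin n), x ^ altdesA π

/-- The number of left peaks of a permutation: indices `1 ≤ i ≤ n-1` with
`π(i-1) < π(i) > π(i+1)`, where `π(0) = 0`. -/
def lpk {n : ℕ} (π : Equiv.Perm (Fin n)) : ℕ :=
  ((Finset.Icc 1 (n - 1)).filter (fun i =>
      aword π (i - 1) < aword π i ∧ aword π (i + 1) < aword π i)).card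

/-- `M n k` is the number of permutations of `{1,…,n}` with exactly `k` left peaks. -/
def M (n k : ℕ) : ℕ :=
  (Finset.univ.filter (fun π : Equiv.Perm (Fin n) => lpk π = k)).card

/-- The derivative polynomials for secant: `Q 0 = 1`,
`Q (n+1) = x Q n + (1+x²) (Q n)'`. -/
noncomputable def Q : ℕ → Polynomial ℝ
  | 0 => 1
  | n + 1 => Polynomial.X * Q n + (1 + Polynomial.X ^ 2) * Polynomial.derivative (Q n)

/-- The coefficients `ξ_{n,i}` (terms with negative index vanish). -/
def xi : ℕ → ℤ → ℤ
  | 0, i => if i = 0 then 1 else 0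
  | n + 1, i => (1 + 2 * (n : ℤ) - 6 * i) * xi n i + ((n : ℤ) - 2 * i + 2) * xi n (i - 1)
      - 4 * (i + 1) * xi n (i + 1)

/-- The polynomial `ξ_n(x) = Σ_{i=0}^{⌊n/2⌋} ξ_{n,i} x^i` as a real function. -/
noncomputable def xiPoly (n : ℕ) (x : ℝ) : ℝ :=
  ∑ i ∈ Finset.range (n / 2 + 1), (xi n i : ℝ) * x ^ i

/-- A snake: a signed permutation with `σ(0) < σ(1) > σ(2) < σ(3) > ⋯`. -/
def IsSnake {n : ℕ} (σ : BSigned n) : Prop :=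
  ∀ i : ℕ, (2 * i + 1 ≤ n → bword σ (2 * i) < bword σ (2 * i + 1)) ∧
    (2 * i + 2 ≤ n → bword σ (2 * i + 2) < bword σ (2 * i + 1))

/-- The Springer number `s_n`: the number of snakes of order `n`. -/
noncomputable def springer (n : ℕ) : ℕ := Nat.card {σ : BSigned n // IsSnake σ}

/-- An alternating (down-up) permutation: `π(1) > π(2) < π(3) > ⋯`. -/
def IsAlternating {m : ℕ} (π : Equiv.Perm (Fin m)) : Prop :=
  ∀ j : ℕ, 1 ≤ j → j + 1 ≤ m →
    (Odd j → aword π (j + 1) < aword π j) ∧ (Even j → aword π j < aword π (j + 1))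

/-- The secant number `E_{2n}`: the number of alternating permutations of `{1,…,2n}`. -/
noncomputable def secantNumber (n : ℕ) : ℕ :=
  Nat.card {π : Equiv.Perm (Fin (2 * n)) // IsAlternating π}

-- auxiliary development
def psiFun {n : ℕ} (t : Equiv.Perm (Fin n)) (q : Fin (n + 1)) (i : Fin (n + 1)) : Fin (n + 1) :=
  if h1 : (i : ℕ) = (q : ℕ) then Fin.last n
  else if h2 : (i : ℕ) < (q : ℕ) then
    Fin.castSucc (t ⟨(i : ℕ), by have := q.isLt; omega⟩)
  else
    Fin.castSucc (t ⟨(i : ℕ) - 1, by have := i.isLt; omega⟩)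

def psiSign {n : ℕ} (s : Fin n → Bool) (q : Fin (n + 1)) (ε : Bool) (i : Fin (n + 1)) : Bool :=
  if h1 : (i : ℕ) = (q : ℕ) then ε
  else if h2 : (i : ℕ) < (q : ℕ) then s ⟨(i : ℕ), by have := q.isLt; omega⟩
  else !(s ⟨(i : ℕ) - 1, by have := i.isLt; omega⟩)

lemma castSucc_ne_last' {n : ℕ} (j : Fin n) : Fin.castSucc j ≠ Fin.last n := by
  intro h
  have := congrArg Fin.val h
  simp only [Fin.coe_castSucc, Fin.val_last] at this
  have := j.isLt; omega

lemma psiFun_inj {n : ℕ} (t : Equiv.Perm (Fin n)) (q : Fin (n + 1)) :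
    Function.Injective (psiFun t q) := by
  intro a b hab
  unfold psiFun at hab
  have hlast : ∀ j : Fin n, Fin.castSucc (t j) ≠ Fin.last n := fun j => castSucc_ne_last' _
  by_cases ha : (a : ℕ) = (q : ℕ) <;> by_cases hb : (b : ℕ) = (q : ℕ)
  · exact Fin.ext (by omega)
  · rw [dif_pos ha, dif_neg hb] at hab
    split at hab <;> exact absurd hab.symm (hlast _)
  · rw [dif_neg ha, dif_pos hb] at hab
    split at hab <;> exact absurd hab (hlast _)
  · rw [dif_neg ha, dif_neg hb] at hab
    have hba := a.isLt
    have hbb := b.isLt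
    split at hab <;> split at hab <;>
      (have h2 := Fin.castSucc_injective _ hab; have h3 := t.injective h2;
       have h4 := congrArg Fin.val h3; simp only at h4; exact Fin.ext (by omega))

noncomputable def Psi {n : ℕ} (p : BSigned n × Fin (n + 1) × Bool) : BSigned (n + 1) :=
  (Equiv.ofBijective (psiFun p.1.1 p.2.1)
      ((Fintype.bijective_iff_injective_and_card _).2 ⟨psiFun_inj _ _, rfl⟩),
    psiSign p.1.2 p.2.1 p.2.2)

lemma Psi_inj {n : ℕ} : Function.Injective (Psi (n := n)) := by
  rintro ⟨⟨t, s⟩, q, ε⟩ ⟨⟨t', s'⟩, q', ε'⟩ h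
  have hf : psiFun t q = psiFun t' q' := by
    have h1 : (Psi (⟨⟨t, s⟩, q, ε⟩ : BSigned n × Fin (n+1) × Bool)).1
        = (Psi (⟨⟨t', s'⟩, q', ε'⟩ : BSigned n × Fin (n+1) × Bool)).1 := by rw [h]
    simp only [Psi] at h1
    exact funext fun i => congrArg (fun e : Equiv.Perm (Fin (n+1)) => e i) h1
  have hs : psiSign s q ε = psiSign s' q' ε' := congrArg Prod.snd h
  have hq : q = q' := by
    by_contra hqq
    have hne : (q : ℕ) ≠ (q' : ℕ) := fun hc => hqq (Fin.ext hc)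
    have := congrFun hf q
    unfold psiFun at this
    rw [dif_pos rfl, dif_neg hne] at this
    split at this <;> exact castSucc_ne_last' _ this.symm
  subst hq
  have ht : t = t' := by
    apply Equiv.ext
    intro j
    by_cases hj : (j : ℕ) < (q : ℕ)
    · have hn : ((⟨(j : ℕ), by have := j.isLt; omega⟩ : Fin (n+1)) : ℕ) ≠ (q : ℕ) := by
        simp; omega
      have := congrFun hf ⟨(j : ℕ), by have := j.isLt; omega⟩
      unfold psiFun at this
      rw [dif_neg hn, dif_pos (by simpa using hj), dif_neg hn, dif_pos (by simpa using hj)]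
        at this
      have hv := Fin.castSucc_injective _ this
      simpa using hv
    · have hlt : (j : ℕ) + 1 < n + 1 := by have := j.isLt; omega
      have hn : (((⟨(j : ℕ) + 1, hlt⟩ : Fin (n+1))) : ℕ) ≠ (q : ℕ) := by simp; omega
      have hn2 : ¬ (((⟨(j : ℕ) + 1, hlt⟩ : Fin (n+1))) : ℕ) < (q : ℕ) := by simp; omega
      have := congrFun hf ⟨(j : ℕ) + 1, hlt⟩
      unfold psiFun at this
      rw [dif_neg hn, dif_neg hn2, dif_neg hn, dif_neg hn2] at this
      have hv := Fin.castSucc_injective _ this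
      have hv2 := t.injective (by simpa using hv)
      simpa using hv2
  subst ht
  have hε : ε = ε' := by
    have := congrFun hs q
    unfold psiSign at this
    rwa [dif_pos rfl, dif_pos rfl] at this
  subst hε
  have hss : s = s' := by
    funext j
    by_cases hj : (j : ℕ) < (q : ℕ)
    · have hn : ((⟨(j : ℕ), by have := j.isLt; omega⟩ : Fin (n+1)) : ℕ) ≠ (q : ℕ) := by
        simp; omega
      have := congrFun hs ⟨(j : ℕ), by have := j.isLt; omega⟩
      unfold psiSign at this
      rw [dif_neg hn, dif_pos (by simpa using hj), dif_neg hn, dif_pos (by simpa using hj)]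
        at this
      simpa using this
    · have hlt : (j : ℕ) + 1 < n + 1 := by have := j.isLt; omega
      have hn : (((⟨(j : ℕ) + 1, hlt⟩ : Fin (n+1))) : ℕ) ≠ (q : ℕ) := by simp; omega
      have hn2 : ¬ (((⟨(j : ℕ) + 1, hlt⟩ : Fin (n+1))) : ℕ) < (q : ℕ) := by simp; omega
      have := congrFun hs ⟨(j : ℕ) + 1, hlt⟩
      unfold psiSign at this
      rw [dif_neg hn, dif_neg hn2, dif_neg hn, dif_neg hn2] at this
      have : s ⟨(j:ℕ), by have := j.isLt; omega⟩ = s' ⟨(j:ℕ), by have := j.isLt; omega⟩ := by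
        simpa using Bool.not_inj this
      simpa using this
  subst hss
  rfl

lemma Psi_bij {n : ℕ} : Function.Bijective (Psi (n := n)) := by
  refine (Fintype.bijective_iff_injective_and_card _).2 ⟨Psi_inj, ?_⟩
  simp only [Fintype.card_prod, Fintype.card_perm, Fintype.card_fun, Fintype.card_fin,
    Fintype.card_bool]
  rw [Nat.factorial_succ]
  ring

lemma bword_bound {n : ℕ} (τ : BSigned n) (j : ℕ) :
    -(n : ℤ) ≤ bword τ j ∧ bword τ j ≤ (n : ℤ) := by
  unfold bword
  split
  · rename_i h
    have ht := (τ.1 ⟨j - 1, by omega⟩).isLt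
    split <;> constructor <;> push_cast <;> omega
  · constructor <;> simp

lemma Psi_fst_apply {n : ℕ} (τ : BSigned n) (q : Fin (n + 1)) (ε : Bool) (i : Fin (n + 1)) :
    (Psi (τ, q, ε)).1 i = psiFun τ.1 q i := rfl

lemma Psi_snd_apply {n : ℕ} (τ : BSigned n) (q : Fin (n + 1)) (ε : Bool) (i : Fin (n + 1)) :
    (Psi (τ, q, ε)).2 i = psiSign τ.2 q ε i := rfl

lemma bword_Psi_le {n : ℕ} (τ : BSigned n) (q : Fin (n + 1)) (ε : Bool) (j : ℕ)
    (hj : j ≤ (q : ℕ)) : bword (Psi (τ, q, ε)) j = bword τ j := by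
  rcases Nat.eq_zero_or_pos j with rfl | hj0
  · unfold bword; rw [dif_neg (by omega), dif_neg (by omega)]
  have hq := q.isLt
  have hcond : 1 ≤ j ∧ j ≤ n + 1 := ⟨hj0, by omega⟩
  have hcond' : 1 ≤ j ∧ j ≤ n := ⟨hj0, by omega⟩
  unfold bword
  rw [dif_pos hcond, dif_pos hcond']
  have hne : ((⟨j - 1, by omega⟩ : Fin (n+1)) : ℕ) ≠ (q : ℕ) := by simp; omega
  have hlt : ((⟨j - 1, by omega⟩ : Fin (n+1)) : ℕ) < (q : ℕ) := by simp; omega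
  rw [Psi_fst_apply, Psi_snd_apply]
  unfold psiFun psiSign
  rw [dif_neg hne, dif_pos hlt, dif_neg hne, dif_pos hlt]
  simp

lemma bword_Psi_self {n : ℕ} (τ : BSigned n) (q : Fin (n + 1)) (ε : Bool) :
    bword (Psi (τ, q, ε)) ((q : ℕ) + 1) = if ε then -((n : ℤ) + 1) else (n : ℤ) + 1 := by
  have hq := q.isLt
  have c1 : 1 ≤ (q : ℕ) + 1 ∧ (q : ℕ) + 1 ≤ n + 1 := ⟨by omega, by omega⟩
  unfold bword
  rw [dif_pos c1]
  have heq : ((⟨(q : ℕ) + 1 - 1, by omega⟩ : Fin (n+1)) : ℕ) = (q : ℕ) := by simp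
  rw [Psi_fst_apply, Psi_snd_apply]
  unfold psiFun psiSign
  rw [dif_pos heq, dif_pos heq]
  split <;> simp [Fin.val_last]

set_option maxHeartbeats 1000000 in
lemma bword_Psi_gt {n : ℕ} (τ : BSigned n) (q : Fin (n + 1)) (ε : Bool) (j : ℕ)
    (h1 : (q : ℕ) + 2 ≤ j) (h2 : j ≤ n + 1) :
    bword (Psi (τ, q, ε)) j = -(bword τ (j - 1)) := by
  have hq := q.isLt
  have c1 : 1 ≤ j ∧ j ≤ n + 1 := ⟨by omega, by omega⟩
  have c2 : 1 ≤ j - 1 ∧ j - 1 ≤ n := ⟨by omega, by omega⟩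
  unfold bword
  rw [dif_pos c1, dif_pos c2]
  have hne : ((⟨j - 1, by omega⟩ : Fin (n+1)) : ℕ) ≠ (q : ℕ) := by simp; omega
  have hnlt : ¬ ((⟨j - 1, by omega⟩ : Fin (n+1)) : ℕ) < (q : ℕ) := by simp; omega
  rw [Psi_fst_apply, Psi_snd_apply]
  unfold psiFun psiSign
  rw [dif_neg hne, dif_neg hnlt, dif_neg hne, dif_neg hnlt]
  have hidx : ((⟨j - 1, by omega⟩ : Fin (n+1)) : ℕ) - 1 = j - 1 - 1 := by simp
  have : (⟨((⟨j - 1, by omega⟩ : Fin (n+1)) : ℕ) - 1, by have := Fin.is_lt (⟨j-1, by omega⟩ : Fin (n+1)); omega⟩ : Fin n) = (⟨j - 1 - 1, by omega⟩ : Fin n) := by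
    apply Fin.ext; simp
  rw [this]
  cases hb : τ.2 ⟨j - 1 - 1, by omega⟩ <;> simp <;> ring



lemma altdes_Psi_lt {n : ℕ} (τ : BSigned n) (q : Fin (n + 1)) (ε : Bool)
    (hq : (q : ℕ) < n) :
    altdesB (Psi (τ, q, ε)) +
        (if (Even (q : ℕ) ∧ bword τ (q : ℕ) < bword τ ((q : ℕ) + 1)) ∨
            (Odd (q : ℕ) ∧ bword τ ((q : ℕ) + 1) < bword τ (q : ℕ)) then 1 else 0)
      = altdesB τ + (if (Even (q : ℕ) ↔ ε = false) then 2 else 0) := by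
  classical
  have hb : ∀ j : ℕ, -(n : ℤ) ≤ bword τ j ∧ bword τ j ≤ (n : ℤ) := bword_bound τ
  set F : ℕ → ℕ := fun j => if (Even j ∧ bword (Psi (τ, q, ε)) j < bword (Psi (τ, q, ε)) (j + 1)) ∨
      (Odd j ∧ bword (Psi (τ, q, ε)) (j + 1) < bword (Psi (τ, q, ε)) j) then 1 else 0 with hF
  set G : ℕ → ℕ := fun j => if (Even j ∧ bword τ j < bword τ (j + 1)) ∨
      (Odd j ∧ bword τ (j + 1) < bword τ j) then 1 else 0 with hG
  have key1 : ∀ j, j < (q : ℕ) → F j = G j := by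
    intro j hj
    simp only [hF, hG, bword_Psi_le τ q ε j (by omega), bword_Psi_le τ q ε (j + 1) (by omega)]
  have hpar2 : Odd ((q : ℕ) + 1) ↔ Even (q : ℕ) := by
    rw [Nat.odd_iff, Nat.even_iff]; omega
  have hpar1 : Even ((q : ℕ) + 1) ↔ ¬ Even (q : ℕ) := Nat.even_add_one
  have key2 : F (q : ℕ) = if (Even (q : ℕ) ↔ ε = false) then 1 else 0 := by
    have h1 := hb (q : ℕ)
    have hle := bword_Psi_le τ q ε (q : ℕ) le_rfl
    have hself := bword_Psi_self τ q ε
    simp only [hF]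
    cases ε
    · norm_num at hself
      rw [hle, hself]
      have hlt : bword τ (q : ℕ) < (n : ℤ) + 1 := by omega
      have hnlt : ¬ ((n : ℤ) + 1 < bword τ (q : ℕ)) := by omega
      refine if_congr ?_ rfl rfl
      rw [show (Even (q : ℕ) ↔ ((false : Bool) = false)) ↔ Even (q : ℕ) by simp]
      constructor
      · rintro (⟨he, _⟩ | ⟨ho, hc⟩)
        · exact he
        · exact absurd hc hnlt
      · intro he
        exact Or.inl ⟨he, hlt⟩
    · rw [if_pos rfl] at hself
      rw [hle, hself]
      have hlt : -((n : ℤ) + 1) < bword τ (q : ℕ) := by omega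
      have hnlt : ¬ (bword τ (q : ℕ) < -((n : ℤ) + 1)) := by omega
      refine if_congr ?_ rfl rfl
      rw [show (Even (q : ℕ) ↔ ((true : Bool) = false)) ↔ ¬ Even (q : ℕ) by simp]
      constructor
      · rintro (⟨he, hc⟩ | ⟨ho, _⟩)
        · exact absurd hc hnlt
        · exact Nat.not_even_iff_odd.mpr ho
      · intro h
        exact Or.inr ⟨Nat.not_even_iff_odd.mp h, hlt⟩
  have key3 : F ((q : ℕ) + 1) = if (Even (q : ℕ) ↔ ε = false) then 1 else 0 := by
    have h1 := hb ((q : ℕ) + 1)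
    have hgt : bword (Psi (τ, q, ε)) ((q : ℕ) + 2) = -(bword τ ((q : ℕ) + 2 - 1)) :=
      bword_Psi_gt τ q ε ((q : ℕ) + 2) (by omega) (by omega)
    rw [show (q : ℕ) + 2 - 1 = (q : ℕ) + 1 by omega] at hgt
    have hself := bword_Psi_self τ q ε
    simp only [hF]
    rw [show (q : ℕ) + 1 + 1 = (q : ℕ) + 2 by omega, hgt]
    cases ε
    · norm_num at hself
      rw [hself]
      have hlt : -(bword τ ((q : ℕ) + 1)) < (n : ℤ) + 1 := by omega
      have hnlt : ¬ ((n : ℤ) + 1 < -(bword τ ((q : ℕ) + 1))) := by omega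
      refine if_congr ?_ rfl rfl
      rw [show (Even (q : ℕ) ↔ ((false : Bool) = false)) ↔ Even (q : ℕ) by simp]
      constructor
      · rintro (⟨_, hc⟩ | ⟨ho, _⟩)
        · exact absurd hc hnlt
        · exact hpar2.mp ho
      · intro he
        exact Or.inr ⟨hpar2.mpr he, hlt⟩
    · rw [if_pos rfl] at hself
      rw [hself]
      have hlt : -((n : ℤ) + 1) < -(bword τ ((q : ℕ) + 1)) := by omega
      have hnlt : ¬ (-(bword τ ((q : ℕ) + 1)) < -((n : ℤ) + 1)) := by omega
      refine if_congr ?_ rfl rfl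
      rw [show (Even (q : ℕ) ↔ ((true : Bool) = false)) ↔ ¬ Even (q : ℕ) by simp]
      constructor
      · rintro (⟨he, _⟩ | ⟨_, hc⟩)
        · exact hpar1.mp he
        · exact absurd hc hnlt
      · intro h
        exact Or.inl ⟨hpar1.mpr h, hlt⟩
  have key4 : ∀ j, (q : ℕ) + 2 ≤ j → j ≤ n → F j = G (j - 1) := by
    intro j h1 h2
    obtain ⟨i, rfl⟩ : ∃ i, j = i + 1 := ⟨j - 1, by omega⟩
    have e1 : bword (Psi (τ, q, ε)) (i + 1) = -(bword τ (i + 1 - 1)) :=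
      bword_Psi_gt τ q ε (i + 1) h1 (by omega)
    have e2 : bword (Psi (τ, q, ε)) (i + 1 + 1) = -(bword τ (i + 1 + 1 - 1)) :=
      bword_Psi_gt τ q ε (i + 1 + 1) (by omega) (by omega)
    simp only [Nat.add_sub_cancel] at e1 e2
    simp only [hF, hG, e1, e2, Nat.add_sub_cancel, neg_lt_neg_iff]
    have hp1 : Even (i + 1) ↔ Odd i := by rw [Nat.even_add_one, Nat.not_even_iff_odd]
    have hp2 : Odd (i + 1) ↔ Even i := by rw [Nat.odd_iff, Nat.even_iff]; omega
    refine if_congr ?_ rfl rfl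
    rw [hp1, hp2]
    exact or_comm
  have hA' : altdesB (Psi (τ, q, ε)) = ∑ j ∈ Finset.range (n + 1), F j := by
    unfold altdesB
    rw [Finset.card_filter]
  have hA : altdesB τ = ∑ j ∈ Finset.range n, G j := by
    unfold altdesB
    rw [Finset.card_filter]
  have split1 : ∑ j ∈ Finset.range (n + 1), F j =
      (∑ j ∈ Finset.Ico 0 (q : ℕ), G j) + F (q : ℕ) + F ((q : ℕ) + 1) +
        ∑ j ∈ Finset.Ico ((q : ℕ) + 1) n, G j := by
    rw [Finset.range_eq_Ico, ← Finset.sum_Ico_consecutive F (Nat.zero_le (q : ℕ)) (by omega),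
      Finset.sum_eq_sum_Ico_succ_bot (by omega : (q : ℕ) < n + 1),
      Finset.sum_eq_sum_Ico_succ_bot (by omega : (q : ℕ) + 1 < n + 1)]
    have tail : ∑ j ∈ Finset.Ico ((q : ℕ) + 2) (n + 1), F j =
        ∑ j ∈ Finset.Ico ((q : ℕ) + 1) n, G j := by
      rw [Finset.sum_Ico_eq_sum_range, Finset.sum_Ico_eq_sum_range]
      rw [show n + 1 - ((q : ℕ) + 2) = n - ((q : ℕ) + 1) by omega]
      refine Finset.sum_congr rfl fun i hi => ?_
      rw [Finset.mem_range] at hi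
      have h := key4 ((q : ℕ) + 2 + i) (by omega) (by omega)
      rw [show (q : ℕ) + 2 + i - 1 = (q : ℕ) + 1 + i by omega] at h
      exact h
    have head : ∑ j ∈ Finset.Ico 0 (q : ℕ), F j = ∑ j ∈ Finset.Ico 0 (q : ℕ), G j :=
      Finset.sum_congr rfl fun j hj => key1 j (by rw [Finset.mem_Ico] at hj; omega)
    rw [tail, head]
    ring
  have split2 : ∑ j ∈ Finset.range n, G j =
      (∑ j ∈ Finset.Ico 0 (q : ℕ), G j) + G (q : ℕ) +
        ∑ j ∈ Finset.Ico ((q : ℕ) + 1) n, G j := by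
    rw [Finset.range_eq_Ico, ← Finset.sum_Ico_consecutive G (Nat.zero_le (q : ℕ)) (by omega),
      Finset.sum_eq_sum_Ico_succ_bot (by omega : (q : ℕ) < n)]
    ring
  have hGq : G (q : ℕ) = if (Even (q : ℕ) ∧ bword τ (q : ℕ) < bword τ ((q : ℕ) + 1)) ∨
      (Odd (q : ℕ) ∧ bword τ ((q : ℕ) + 1) < bword τ (q : ℕ)) then 1 else 0 := rfl
  rw [hA', hA, split1, split2, key2, key3, ← hGq]
  by_cases hc : (Even (q : ℕ) ↔ ε = false)
  · simp only [if_pos hc]; omega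
  · simp only [if_neg hc]; omega

lemma altdes_Psi_last {n : ℕ} (τ : BSigned n) (ε : Bool) :
    altdesB (Psi (τ, Fin.last n, ε)) = altdesB τ + (if (Even n ↔ ε = false) then 1 else 0) := by
  classical
  have hb : ∀ j : ℕ, -(n : ℤ) ≤ bword τ j ∧ bword τ j ≤ (n : ℤ) := bword_bound τ
  have hql : ((Fin.last n : Fin (n + 1)) : ℕ) = n := rfl
  set F : ℕ → ℕ := fun j => if (Even j ∧ bword (Psi (τ, Fin.last n, ε)) j <
        bword (Psi (τ, Fin.last n, ε)) (j + 1)) ∨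
      (Odd j ∧ bword (Psi (τ, Fin.last n, ε)) (j + 1) < bword (Psi (τ, Fin.last n, ε)) j)
      then 1 else 0 with hF
  set G : ℕ → ℕ := fun j => if (Even j ∧ bword τ j < bword τ (j + 1)) ∨
      (Odd j ∧ bword τ (j + 1) < bword τ j) then 1 else 0 with hG
  have key1 : ∀ j, j < n → F j = G j := by
    intro j hj
    simp only [hF, hG, bword_Psi_le τ (Fin.last n) ε j (by rw [hql]; omega),
      bword_Psi_le τ (Fin.last n) ε (j + 1) (by rw [hql]; omega)]
  have key2 : F n = if (Even n ↔ ε = false) then 1 else 0 := by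
    have h1 := hb n
    have hle := bword_Psi_le τ (Fin.last n) ε n (by rw [hql])
    have hself := bword_Psi_self τ (Fin.last n) ε
    rw [hql] at hself
    simp only [hF]
    cases ε
    · norm_num at hself
      rw [hle, hself]
      have hlt : bword τ n < (n : ℤ) + 1 := by omega
      have hnlt : ¬ ((n : ℤ) + 1 < bword τ n) := by omega
      refine if_congr ?_ rfl rfl
      rw [show (Even n ↔ ((false : Bool) = false)) ↔ Even n by simp]
      constructor
      · rintro (⟨he, _⟩ | ⟨ho, hc⟩)
        · exact he
        · exact absurd hc hnlt
      · intro he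
        exact Or.inl ⟨he, hlt⟩
    · rw [if_pos rfl] at hself
      rw [hle, hself]
      have hlt : -((n : ℤ) + 1) < bword τ n := by omega
      have hnlt : ¬ (bword τ n < -((n : ℤ) + 1)) := by omega
      refine if_congr ?_ rfl rfl
      rw [show (Even n ↔ ((true : Bool) = false)) ↔ ¬ Even n by simp]
      constructor
      · rintro (⟨he, hc⟩ | ⟨ho, _⟩)
        · exact absurd hc hnlt
        · exact Nat.not_even_iff_odd.mpr ho
      · intro h
        exact Or.inr ⟨Nat.not_even_iff_odd.mp h, hlt⟩
  have hA' : altdesB (Psi (τ, Fin.last n, ε)) = ∑ j ∈ Finset.range (n + 1), F j := by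
    unfold altdesB
    rw [Finset.card_filter]
  have hA : altdesB τ = ∑ j ∈ Finset.range n, G j := by
    unfold altdesB
    rw [Finset.card_filter]
  rw [hA', hA, Finset.sum_range_succ, key2,
    Finset.sum_congr rfl fun j hj => key1 j (Finset.mem_range.mp hj)]

lemma altdesB_le {n : ℕ} (τ : BSigned n) : altdesB τ ≤ n := by
  unfold altdesB
  exact le_trans (Finset.card_filter_le _ _) (by rw [Finset.card_range])

lemma per_tau {n : ℕ} (τ : BSigned n) (x : ℝ) :
    ∑ q : Fin (n + 1), ∑ ε : Bool, x ^ altdesB (Psi (τ, q, ε)) =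
      (1 + x ^ 2) * ((altdesB τ : ℝ) * x ^ (altdesB τ - 1)
          + ((n - altdesB τ : ℕ) : ℝ) * x ^ altdesB τ)
        + x ^ altdesB τ * (1 + x) := by
  classical
  set A := altdesB τ with hA
  set P : ℕ → Prop := fun j => (Even j ∧ bword τ j < bword τ (j + 1)) ∨
      (Odd j ∧ bword τ (j + 1) < bword τ j) with hP
  have hAP : A = ((Finset.range n).filter P).card := rfl
  -- inner sum for q < n
  have inner : ∀ q : Fin (n + 1), (q : ℕ) < n →
      ∑ ε : Bool, x ^ altdesB (Psi (τ, q, ε)) =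
        (1 + x ^ 2) * (if P (q : ℕ) then x ^ (A - 1) else x ^ A) := by
    intro q hq
    have hcard : (if P (q : ℕ) then 1 else 0) ≤ A := by
      by_cases hp : P (q : ℕ)
      · rw [if_pos hp]
        rw [hAP]
        exact Finset.card_pos.mpr ⟨(q : ℕ), Finset.mem_filter.mpr
          ⟨Finset.mem_range.mpr hq, hp⟩⟩
      · rw [if_neg hp]; omega
    have hexp : ∀ ε : Bool, altdesB (Psi (τ, q, ε)) =
        (if P (q : ℕ) then A - 1 else A) + (if (Even (q : ℕ) ↔ ε = false) then 2 else 0) := by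
      intro ε
      have h := altdes_Psi_lt τ q ε hq
      by_cases hp : P (q : ℕ) <;> by_cases he : (Even (q : ℕ) ↔ ε = false)
      · rw [if_pos hp, if_pos he] at h ⊢
        rw [if_pos hp] at hcard
        omega
      · rw [if_pos hp, if_neg he] at h ⊢
        rw [if_pos hp] at hcard
        omega
      · rw [if_neg hp, if_pos he] at h ⊢
        omega
      · rw [if_neg hp, if_neg he] at h ⊢
        omega
    rw [Fintype.sum_bool, hexp true, hexp false]
    have hy : x ^ (if P (q : ℕ) then A - 1 else A)
        = (if P (q : ℕ) then x ^ (A - 1) else x ^ A) := by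
      by_cases hp : P (q : ℕ) <;> simp [hp]
    by_cases hev : Even (q : ℕ)
    · rw [if_neg (show ¬ (Even (q : ℕ) ↔ ((true : Bool) = false)) by simp [hev]),
        if_pos (show (Even (q : ℕ) ↔ ((false : Bool) = false)) by simp [hev])]
      rw [add_zero, pow_add, hy]
      ring
    · rw [if_pos (show (Even (q : ℕ) ↔ ((true : Bool) = false)) by simp [hev]),
        if_neg (show ¬ (Even (q : ℕ) ↔ ((false : Bool) = false)) by simp [hev])]
      rw [add_zero, pow_add, hy]
      ring
  rw [Fin.sum_univ_castSucc]
  have hlast : ∑ ε : Bool, x ^ altdesB (Psi (τ, Fin.last n, ε)) = x ^ A * (1 + x) := by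
    rw [Fintype.sum_bool, altdes_Psi_last, altdes_Psi_last]
    by_cases hev : Even n
    · rw [if_neg (show ¬ (Even n ↔ ((true : Bool) = false)) by simp [hev]),
        if_pos (show (Even n ↔ ((false : Bool) = false)) by simp [hev])]
      rw [add_zero, pow_succ]
      ring
    · rw [if_pos (show (Even n ↔ ((true : Bool) = false)) by simp [hev]),
        if_neg (show ¬ (Even n ↔ ((false : Bool) = false)) by simp [hev])]
      rw [add_zero, pow_succ]
      ring
  rw [hlast]
  congr 1
  have hcast : ∀ q : Fin n, ((Fin.castSucc q : Fin (n + 1)) : ℕ) = (q : ℕ) := fun q => rfl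
  rw [Finset.sum_congr rfl (fun q _ => inner (Fin.castSucc q) (by rw [hcast]; exact q.isLt))]
  rw [← Finset.mul_sum]
  congr 1
  have : ∑ q : Fin n, (if P ((Fin.castSucc q : Fin (n + 1)) : ℕ) then x ^ (A - 1) else x ^ A)
      = ∑ j ∈ Finset.range n, (if P j then x ^ (A - 1) else x ^ A) := by
    rw [← Fin.sum_univ_eq_sum_range]
    exact Finset.sum_congr rfl fun q _ => by rw [hcast q]
  rw [this, Finset.sum_ite, Finset.sum_const, Finset.sum_const, ← hAP]
  have hnA : ((Finset.range n).filter fun j => ¬ P j).card = n - A := by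
    have h := Finset.card_filter_add_card_filter_not (s := Finset.range n) (p := P)
    rw [Finset.card_range, ← hAP] at h
    omega
  rw [hnA]
  simp [nsmul_eq_mul]

lemma bpoly_deriv (n : ℕ) (x : ℝ) :
    deriv (Bpoly n) x = ∑ τ : BSigned n, (altdesB τ : ℝ) * x ^ (altdesB τ - 1) := by
  have h : HasDerivAt (Bpoly n)
      (∑ τ : BSigned n, (altdesB τ : ℝ) * x ^ (altdesB τ - 1)) x := by
    have h1 := HasDerivAt.fun_sum (u := (Finset.univ : Finset (BSigned n)))
      (A := fun τ y => y ^ altdesB τ)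
      (A' := fun τ => (altdesB τ : ℝ) * x ^ (altdesB τ - 1))
      (fun τ _ => hasDerivAt_pow (altdesB τ) x)
    exact h1
  exact h.deriv

lemma bpoly_rec (n : ℕ) (x : ℝ) :
    Bpoly (n + 1) x =
      (1 + n + x + n * x ^ 2) * Bpoly n x + (1 - x) * (1 + x ^ 2) * deriv (Bpoly n) x := by
  classical
  have hre : Bpoly (n + 1) x = ∑ p : BSigned n × Fin (n + 1) × Bool, x ^ altdesB (Psi p) :=
    (Fintype.sum_bijective Psi Psi_bij (fun p => x ^ altdesB (Psi p))
      (fun σ => x ^ altdesB σ) (fun p => rfl)).symm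
  rw [hre, Fintype.sum_prod_type]
  have hin : ∀ τ : BSigned n, ∑ qe : Fin (n + 1) × Bool, x ^ altdesB (Psi (τ, qe)) =
      ∑ q : Fin (n + 1), ∑ ε : Bool, x ^ altdesB (Psi (τ, q, ε)) :=
    fun τ => Fintype.sum_prod_type _
  rw [Finset.sum_congr rfl fun τ _ => (hin τ).trans (per_tau τ x)]
  have hc2 : ∀ τ : BSigned n, ((n - altdesB τ : ℕ) : ℝ) * x ^ altdesB τ =
      (n : ℝ) * x ^ altdesB τ - x * ((altdesB τ : ℝ) * x ^ (altdesB τ - 1)) := by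
    intro τ
    have hle := altdesB_le τ
    rcases Nat.eq_zero_or_pos (altdesB τ) with h0 | hpos
    · rw [h0]; simp
    · have hx : x * x ^ (altdesB τ - 1) = x ^ altdesB τ := by
        rw [← pow_succ']
        congr 1
        omega
      rw [Nat.cast_sub hle, ← hx]
      ring
  rw [Finset.sum_add_distrib]
  rw [show (∑ τ : BSigned n, (1 + x ^ 2) * ((altdesB τ : ℝ) * x ^ (altdesB τ - 1)
      + ((n - altdesB τ : ℕ) : ℝ) * x ^ altdesB τ)) = (1 + x ^ 2) *
      ∑ τ : BSigned n, ((altdesB τ : ℝ) * x ^ (altdesB τ - 1)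
      + ((n - altdesB τ : ℕ) : ℝ) * x ^ altdesB τ) from (Finset.mul_sum _ _ _).symm]
  rw [Finset.sum_add_distrib]
  rw [Finset.sum_congr rfl fun τ _ => hc2 τ]
  rw [Finset.sum_sub_distrib, ← Finset.mul_sum, ← Finset.mul_sum, ← Finset.sum_mul]
  rw [← bpoly_deriv n x]
  have hBB : ∑ τ : BSigned n, x ^ altdesB τ = Bpoly n x := rfl
  rw [hBB]
  ring


/-- the recurrence
`B̂_{n+1}(x) = (1 + n + x + n x²)·B̂_n(x) + (1-x)(1+x²)·B̂_n'(x)` for all `n ≥ 0`,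
with initial conditions `B̂_0(x) = 1` and `B̂_1(x) = 1 + x`. -/
theorem stmt3 :
    (∀ (n : ℕ) (x : ℝ),
      Bpoly (n + 1) x =
        (1 + n + x + n * x ^ 2) * Bpoly n x + (1 - x) * (1 + x ^ 2) * deriv (Bpoly n) x) ∧
    (∀ x : ℝ, Bpoly 0 x = 1) ∧ (∀ x : ℝ, Bpoly 1 x = 1 + x) := by
  have h0 : ∀ x : ℝ, Bpoly 0 x = 1 := by
    intro x
    have hz : ∀ σ : BSigned 0, altdesB σ = 0 := by
      intro σ
      simp [altdesB]
    rw [Bpoly]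
    rw [Finset.sum_congr rfl fun σ _ => by rw [hz σ, pow_zero]]
    simp
  refine ⟨bpoly_rec, h0, ?_⟩
  intro x
  rw [bpoly_rec 0 x, h0 x]
  have hc : Bpoly 0 = fun _ : ℝ => (1 : ℝ) := funext h0
  rw [hc, deriv_const]
  norm_num
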